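/- In Setting (B) with homoskedastic errors σ²_{i,j} = σ² for all i, j: Var(β̂^NPWP) = (τ² + σ²)·Σ_{j=2}^{J−1} v_j²·(1/(j−1) + 1/(J−j)) + 2τ²·Σ_{j=2}^{J−2} Σ_{k=j+1}^{J−1} v_j·v_k·(J−1)/((J−j)(k−1)); Var(β̂^CO) = 2σ²·Σ_{j=2}^{J−1} w_j²·(1 + 1/(J−j)); and Cov(β̂^NPWP, β̂^CO) = σ²·Σ_{j=2}^{J−1} v_j·w_j·(1/(j−1) + 1/(J−j)). -/

import Mathlib

open MeasureTheory ProbabilityTheory Finset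

/-- The covariance of two real random variables (with respect to the ambient
probability measure of a `MeasureSpace`). -/
noncomputable def covar {Ω : Type*} [MeasureSpace Ω] (f g : Ω → ℝ) : ℝ :=
  ∫ ω, (f ω - ∫ x, f x) * (g ω - ∫ x, g x)

section Helpers

/-! ### Auxiliary lemmas -/

variable {Ω : Type*} [MeasureSpace Ω] [IsProbabilityMeasure (ℙ : Measure Ω)]

lemma covar_sum_sum {ι : Type*} (s : Finset ι) (Z : ι → Ω → ℝ)
    (hL2 : ∀ x ∈ s, MemLp (Z x) 2 ℙ)
    (hind : ∀ x ∈ s, ∀ y ∈ s, x ≠ y → IndepFun (Z x) (Z y) ℙ)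
    (p q : ι → ℝ) (cS cT : ℝ) (f g : Ω → ℝ)
    (hf : ∀ ω, f ω = cS + ∑ x ∈ s, p x * Z x ω)
    (hg : ∀ ω, g ω = cT + ∑ x ∈ s, q x * Z x ω) :
    covar f g = ∑ x ∈ s, p x * q x * variance (Z x) ℙ := by
  classical
  have hint : ∀ x ∈ s, Integrable (Z x) ℙ := fun x hx =>
    (hL2 x hx).integrable (by norm_num)
  set m : ι → ℝ := fun x => ∫ ω, Z x ω with hm
  set Zc : ι → Ω → ℝ := fun x ω => Z x ω - m x with hZc
  have hL2c : ∀ x ∈ s, MemLp (Zc x) 2 ℙ := fun x hx => (hL2 x hx).sub (memLp_const _)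
  have hEc : ∀ x ∈ s, ∫ ω, Zc x ω = 0 := by
    intro x hx
    simp only [hZc]
    rw [integral_sub (hint x hx) (integrable_const _), integral_const]
    simp [hm]
  have hflip : ∀ ω, f ω - (∫ x, f x) = ∑ x ∈ s, p x * Zc x ω := by
    have hEf : (∫ x, f x) = cS + ∑ x ∈ s, p x * m x := by
      rw [show f = fun ω => cS + ∑ x ∈ s, p x * Z x ω from funext hf]
      rw [integral_add (integrable_const _) (integrable_finset_sum _ fun x hx =>
        (hint x hx).const_mul _), integral_finset_sum _ fun x hx => (hint x hx).const_mul _]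
      simp only [integral_const, probReal_univ, one_smul, integral_const_mul]
      rfl
    intro ω
    rw [hf ω, hEf]
    simp only [hZc, mul_sub]
    rw [Finset.sum_sub_distrib]
    ring
  have hglip : ∀ ω, g ω - (∫ x, g x) = ∑ x ∈ s, q x * Zc x ω := by
    have hEg : (∫ x, g x) = cT + ∑ x ∈ s, q x * m x := by
      rw [show g = fun ω => cT + ∑ x ∈ s, q x * Z x ω from funext hg]
      rw [integral_add (integrable_const _) (integrable_finset_sum _ fun x hx =>
        (hint x hx).const_mul _), integral_finset_sum _ fun x hx => (hint x hx).const_mul _]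
      simp only [integral_const, probReal_univ, one_smul, integral_const_mul]
      rfl
    intro ω
    rw [hg ω, hEg]
    simp only [hZc, mul_sub]
    rw [Finset.sum_sub_distrib]
    ring
  have hprod : ∀ x ∈ s, ∀ y ∈ s, Integrable (fun ω => Zc x ω * Zc y ω) ℙ := by
    intro x hx y hy
    have := ((hL2c y hy).smul (hL2c x hx) :
      MemLp ((Zc x) • (Zc y)) 1 ℙ)
    rw [memLp_one_iff_integrable] at this
    exact this
  have key : covar f g = ∑ x ∈ s, ∑ y ∈ s, p x * q y * ∫ ω, Zc x ω * Zc y ω := by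
    unfold covar
    have : (fun ω => (f ω - ∫ x, f x) * (g ω - ∫ x, g x))
        = fun ω => ∑ x ∈ s, ∑ y ∈ s, (p x * q y) * (Zc x ω * Zc y ω) := by
      funext ω
      rw [hflip ω, hglip ω, Finset.sum_mul_sum]
      refine Finset.sum_congr rfl fun x hx => Finset.sum_congr rfl fun y hy => by ring
    rw [this]
    rw [integral_finset_sum _ fun x hx => integrable_finset_sum _ fun y hy =>
      ((hprod x hx y hy).const_mul _)]
    refine Finset.sum_congr rfl fun x hx => ?_
    rw [integral_finset_sum _ fun y hy => ((hprod x hx y hy).const_mul _)]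
    exact Finset.sum_congr rfl fun y hy => integral_const_mul _ _
  rw [key]
  refine Finset.sum_congr rfl fun x hx => ?_
  rw [Finset.sum_eq_single x]
  · have hvar : ∫ ω, Zc x ω * Zc x ω = variance (Z x) ℙ := by
      rw [variance_eq_integral (hL2 x hx).aestronglyMeasurable.aemeasurable]
      refine integral_congr_ae (Filter.Eventually.of_forall fun ω => ?_)
      simp [hZc, hm, sq]
    rw [hvar]
  · intro y hy hxy
    have hI : IndepFun (Zc x) (Zc y) ℙ :=
      (hind x hx y hy (Ne.symm hxy)).comp (measurable_id.sub_const (m x))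
        (measurable_id.sub_const (m y))
    have := hI.integral_mul_eq_mul_integral (hL2c x hx).aestronglyMeasurable (hL2c y hy).aestronglyMeasurable
    have h0 : ∫ ω, Zc x ω * Zc y ω = 0 := by
      rw [show (fun ω => Zc x ω * Zc y ω) = (Zc x) * (Zc y) from rfl] at *
      rw [this, hEc x hx, hEc y hy, mul_zero]
    rw [h0, mul_zero]
  · intro hxs; exact absurd hx hxs

lemma variance_eq_covar (f : Ω → ℝ) (hf : MemLp f 2 ℙ) : variance f ℙ = covar f f := by
  rw [variance_eq_integral hf.aestronglyMeasurable.aemeasurable]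
  unfold covar
  refine integral_congr_ae (Filter.Eventually.of_forall fun ω => ?_)
  simp [sq]

end Helpers

/-! ### Coefficient functions and scalar sums -/

noncomputable def dcoef (J j i : ℕ) : ℝ :=
  if i ≤ j - 1 then ((j : ℝ) - 1)⁻¹ else -(((J : ℝ) - (j : ℝ))⁻¹)

noncomputable def ecoef (J j i : ℕ) : ℝ :=
  if i = j - 1 then 1 else if j ≤ i then -(((J : ℝ) - (j : ℝ))⁻¹) else 0

lemma sum_piece (a b : ℕ) (f : ℕ → ℝ) (c : ℝ) (h : ∀ i, a < i → i ≤ b → f i = c) :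
    ∑ i ∈ Ioc a b, f i = ((b - a : ℕ) : ℝ) * c := by
  rw [Finset.sum_congr rfl fun i hi => h i (mem_Ioc.mp hi).1 (mem_Ioc.mp hi).2,
    Finset.sum_const, Nat.card_Ioc, nsmul_eq_mul]

lemma split2 (a b c : ℕ) (hab : a ≤ b) (hbc : b ≤ c) (f : ℕ → ℝ) :
    ∑ i ∈ Ioc a c, f i = ∑ i ∈ Ioc a b, f i + ∑ i ∈ Ioc b c, f i :=
  (Finset.sum_Ioc_consecutive f hab hbc).symm

lemma split3 (a b c d : ℕ) (hab : a ≤ b) (hbc : b ≤ c) (hcd : c ≤ d) (f : ℕ → ℝ) :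
    ∑ i ∈ Ioc a d, f i
      = ∑ i ∈ Ioc a b, f i + ∑ i ∈ Ioc b c, f i + ∑ i ∈ Ioc c d, f i := by
  rw [← Finset.sum_Ioc_consecutive f (hab.trans hbc) hcd,
    ← Finset.sum_Ioc_consecutive f hab hbc]

lemma Icc_one_Ioc (b : ℕ) : Icc 1 b = Ioc 0 b := by
  ext i; simp only [mem_Icc, mem_Ioc]; omega

section Scalar

variable {J j k : ℕ}

lemma cast_facts (hJ : 3 ≤ J) (hj2 : 2 ≤ j) (hjJ : j ≤ J - 1) :
    ((j : ℝ) - 1 ≠ 0) ∧ ((J : ℝ) - j ≠ 0) := by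
  have h1 : (2 : ℝ) ≤ (j : ℝ) := by exact_mod_cast hj2
  have h2 : (j : ℝ) < (J : ℝ) := by exact_mod_cast (by omega : j < J)
  constructor <;> nlinarith

lemma Sdd_diag (hJ : 3 ≤ J) (hj2 : 2 ≤ j) (hjJ : j ≤ J - 1) :
    ∑ i ∈ Icc 1 (J - 1), dcoef J j i * dcoef J j i
      = ((j : ℝ) - 1)⁻¹ + ((J : ℝ) - j)⁻¹ := by
  obtain ⟨ha, hb⟩ := cast_facts hJ hj2 hjJ
  rw [Icc_one_Ioc, split2 0 (j - 1) (J - 1) (by omega) (by omega),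
    sum_piece 0 (j - 1) _ (((j : ℝ) - 1)⁻¹ * ((j : ℝ) - 1)⁻¹)
      (fun i h1 h2 => by rw [dcoef, if_pos h2]),
    sum_piece (j - 1) (J - 1) _ ((-(((J : ℝ) - j)⁻¹)) * (-(((J : ℝ) - j)⁻¹)))
      (fun i h1 h2 => by rw [dcoef, if_neg (by omega)])]
  have c1 : ((j - 1 - 0 : ℕ) : ℝ) = (j : ℝ) - 1 := by
    have : (j - 1 - 0 : ℕ) = j - 1 := by omega
    rw [this, Nat.cast_sub (by omega)]; norm_num
  have c2 : ((J - 1 - (j - 1) : ℕ) : ℝ) = (J : ℝ) - j := by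
    have : (J - 1 - (j - 1) : ℕ) = J - j := by omega
    rw [this, Nat.cast_sub (by omega)]
  rw [c1, c2]
  field_simp

lemma Sdd_lt (hJ : 3 ≤ J) (hj2 : 2 ≤ j) (hjk : j < k) (hkJ : k ≤ J - 1) :
    ∑ i ∈ Icc 1 (J - 1), dcoef J j i * dcoef J k i
      = ((J : ℝ) - 1) / (((J : ℝ) - j) * ((k : ℝ) - 1)) := by
  obtain ⟨haj, hbj⟩ := cast_facts hJ hj2 (by omega)
  obtain ⟨hak, hbk⟩ := cast_facts hJ (by omega) hkJ
  rw [Icc_one_Ioc, split3 0 (j - 1) (k - 1) (J - 1) (by omega) (by omega) (by omega),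
    sum_piece 0 (j - 1) _ (((j : ℝ) - 1)⁻¹ * ((k : ℝ) - 1)⁻¹)
      (fun i h1 h2 => by rw [dcoef, dcoef, if_pos h2, if_pos (by omega)]),
    sum_piece (j - 1) (k - 1) _ ((-(((J : ℝ) - j)⁻¹)) * ((k : ℝ) - 1)⁻¹)
      (fun i h1 h2 => by rw [dcoef, dcoef, if_neg (by omega), if_pos (by omega)]),
    sum_piece (k - 1) (J - 1) _ ((-(((J : ℝ) - j)⁻¹)) * (-(((J : ℝ) - k)⁻¹)))
      (fun i h1 h2 => by rw [dcoef, dcoef, if_neg (by omega), if_neg (by omega)])]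
  have c1 : ((j - 1 - 0 : ℕ) : ℝ) = (j : ℝ) - 1 := by
    have : (j - 1 - 0 : ℕ) = j - 1 := by omega
    rw [this, Nat.cast_sub (by omega)]; norm_num
  have c2 : ((k - 1 - (j - 1) : ℕ) : ℝ) = (k : ℝ) - j := by
    have : (k - 1 - (j - 1) : ℕ) = k - j := by omega
    rw [this, Nat.cast_sub (by omega)]
  have c3 : ((J - 1 - (k - 1) : ℕ) : ℝ) = (J : ℝ) - k := by
    have : (J - 1 - (k - 1) : ℕ) = J - k := by omega
    rw [this, Nat.cast_sub (by omega)]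
  rw [c1, c2, c3]
  field_simp
  ring

lemma See_diag (hJ : 3 ≤ J) (hj2 : 2 ≤ j) (hjJ : j ≤ J - 1) :
    ∑ i ∈ Icc 1 (J - 1), ecoef J j i * ecoef J j i
      = 1 + ((J : ℝ) - j)⁻¹ := by
  obtain ⟨ha, hb⟩ := cast_facts hJ hj2 hjJ
  rw [Icc_one_Ioc, split3 0 (j - 2) (j - 1) (J - 1) (by omega) (by omega) (by omega),
    sum_piece 0 (j - 2) _ 0
      (fun i h1 h2 => by rw [ecoef, if_neg (by omega), if_neg (by omega)]; ring),
    sum_piece (j - 2) (j - 1) _ 1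
      (fun i h1 h2 => by rw [ecoef, if_pos (by omega)]; ring),
    sum_piece (j - 1) (J - 1) _ ((-(((J : ℝ) - j)⁻¹)) * (-(((J : ℝ) - j)⁻¹)))
      (fun i h1 h2 => by rw [ecoef, if_neg (by omega), if_pos (by omega)])]
  have c2 : ((j - 1 - (j - 2) : ℕ) : ℝ) = 1 := by
    have : (j - 1 - (j - 2) : ℕ) = 1 := by omega
    rw [this]; norm_num
  have c3 : ((J - 1 - (j - 1) : ℕ) : ℝ) = (J : ℝ) - j := by
    have : (J - 1 - (j - 1) : ℕ) = J - j := by omega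
    rw [this, Nat.cast_sub (by omega)]
  rw [c2, c3]
  field_simp
  ring

lemma See_succ (hJ : 3 ≤ J) (hj2 : 2 ≤ j) (hjJ : j + 1 ≤ J - 1) :
    ∑ i ∈ Icc 1 (J - 1), ecoef J j i * ecoef J (j + 1) i = 0 := by
  obtain ⟨ha, hb⟩ := cast_facts hJ hj2 (by omega)
  obtain ⟨ha', hb'⟩ := cast_facts hJ (by omega) hjJ
  have hc : ((j : ℝ) + 1) = ((j + 1 : ℕ) : ℝ) := by push_cast; ring
  rw [Icc_one_Ioc, split3 0 (j - 1) j (J - 1) (by omega) (by omega) (by omega),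
    sum_piece 0 (j - 1) _ 0
      (fun i h1 h2 => by
        have h0 : ecoef J (j + 1) i = 0 := by
          rw [ecoef, if_neg (by omega), if_neg (by omega)]
        rw [h0, mul_zero]),
    sum_piece (j - 1) j _ ((-(((J : ℝ) - j)⁻¹)) * 1)
      (fun i h1 h2 => by
        have hij : i = j := by omega
        rw [hij]
        have h0 : ecoef J (j + 1) j = 1 := by rw [ecoef, if_pos (by omega)]
        rw [h0, ecoef, if_neg (by omega), if_pos (by omega)]),
    sum_piece j (J - 1) _ ((-(((J : ℝ) - j)⁻¹)) * (-(((J : ℝ) - (j + 1 : ℕ))⁻¹)))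
      (fun i h1 h2 => by
        rw [ecoef, ecoef, if_neg (by omega), if_pos (by omega), if_neg (by omega),
          if_pos (by omega)])]
  have c3 : ((J - 1 - j : ℕ) : ℝ) = (J : ℝ) - j - 1 := by
    have : (J - 1 - j : ℕ) = J - (j + 1) := by omega
    rw [this, Nat.cast_sub (by omega)]; push_cast; ring
  have c4 : ((J : ℝ) - ((j + 1 : ℕ) : ℝ)) = (J : ℝ) - j - 1 := by push_cast; ring
  have hb'' : (J : ℝ) - j - 1 ≠ 0 := by
    intro h; apply hb'
    rw [show ((j + 1 : ℕ) : ℝ) = (j : ℝ) + 1 by push_cast; ring]; linarith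
  rw [c3, c4]
  rw [show ((j - (j - 1) : ℕ) : ℝ) = 1 by rw [show j - (j - 1) = 1 by omega]; norm_num]
  field_simp
  ring

lemma Sde_diag (hJ : 3 ≤ J) (hj2 : 2 ≤ j) (hjJ : j ≤ J - 1) :
    ∑ i ∈ Icc 1 (J - 1), dcoef J j i * ecoef J j i
      = ((j : ℝ) - 1)⁻¹ + ((J : ℝ) - j)⁻¹ := by
  obtain ⟨ha, hb⟩ := cast_facts hJ hj2 hjJ
  rw [Icc_one_Ioc, split3 0 (j - 2) (j - 1) (J - 1) (by omega) (by omega) (by omega),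
    sum_piece 0 (j - 2) _ 0
      (fun i h1 h2 => by rw [ecoef, if_neg (by omega), if_neg (by omega)]; ring),
    sum_piece (j - 2) (j - 1) _ (((j : ℝ) - 1)⁻¹ * 1)
      (fun i h1 h2 => by
        rw [dcoef, ecoef, if_pos (by omega), if_pos (by omega)]),
    sum_piece (j - 1) (J - 1) _ ((-(((J : ℝ) - j)⁻¹)) * (-(((J : ℝ) - j)⁻¹)))
      (fun i h1 h2 => by
        rw [dcoef, ecoef, if_neg (by omega), if_neg (by omega), if_pos (by omega)])]
  have c2 : ((j - 1 - (j - 2) : ℕ) : ℝ) = 1 := by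
    have : (j - 1 - (j - 2) : ℕ) = 1 := by omega
    rw [this]; norm_num
  have c3 : ((J - 1 - (j - 1) : ℕ) : ℝ) = (J : ℝ) - j := by
    have : (J - 1 - (j - 1) : ℕ) = J - j := by omega
    rw [this, Nat.cast_sub (by omega)]
  rw [c2, c3]
  field_simp
  ring

lemma Sde_succ (hJ : 3 ≤ J) (hj2 : 2 ≤ j) (hjJ : j + 1 ≤ J - 1) :
    ∑ i ∈ Icc 1 (J - 1), dcoef J j i * ecoef J (j + 1) i = 0 := by
  obtain ⟨ha, hb⟩ := cast_facts hJ hj2 (by omega)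
  obtain ⟨ha', hb'⟩ := cast_facts hJ (by omega) hjJ
  rw [Icc_one_Ioc, split3 0 (j - 1) j (J - 1) (by omega) (by omega) (by omega),
    sum_piece 0 (j - 1) _ 0
      (fun i h1 h2 => by
        rw [ecoef, if_neg (by omega), if_neg (by omega)]; ring),
    sum_piece (j - 1) j _ ((-(((J : ℝ) - j)⁻¹)) * 1)
      (fun i h1 h2 => by
        have hij : i = j := by omega
        rw [hij]
        have h0 : ecoef J (j + 1) j = 1 := by rw [ecoef, if_pos (by omega)]
        rw [h0, dcoef, if_neg (by omega)]),
    sum_piece j (J - 1) _ ((-(((J : ℝ) - j)⁻¹)) * (-(((J : ℝ) - (j + 1 : ℕ))⁻¹)))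
      (fun i h1 h2 => by
        rw [dcoef, ecoef, if_neg (by omega), if_neg (by omega), if_pos (by omega)])]
  have c3 : ((J - 1 - j : ℕ) : ℝ) = (J : ℝ) - j - 1 := by
    have : (J - 1 - j : ℕ) = J - (j + 1) := by omega
    rw [this, Nat.cast_sub (by omega)]; push_cast; ring
  have c4 : ((J : ℝ) - ((j + 1 : ℕ) : ℝ)) = (J : ℝ) - j - 1 := by push_cast; ring
  have hb'' : (J : ℝ) - j - 1 ≠ 0 := by
    intro h; apply hb'
    rw [show ((j + 1 : ℕ) : ℝ) = (j : ℝ) + 1 by push_cast; ring]; linarith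
  rw [c3, c4]
  rw [show ((j - (j - 1) : ℕ) : ℝ) = 1 by rw [show j - (j - 1) = 1 by omega]; norm_num]
  field_simp
  ring

end Scalar

lemma sum_sq_split (b : ℕ) (F : ℕ → ℕ → ℝ) (hsym : ∀ j k, F j k = F k j) :
    ∑ j ∈ Icc 2 b, ∑ k ∈ Icc 2 b, F j k
      = ∑ j ∈ Icc 2 b, F j j + 2 * ∑ j ∈ Icc 2 b, ∑ k ∈ Icc (j + 1) b, F j k := by
  have hin : ∀ j ∈ Icc 2 b, ∑ k ∈ Icc 2 b, F j k
      = (∑ k ∈ Icc 2 (j - 1), F j k) + F j j + ∑ k ∈ Icc (j + 1) b, F j k := by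
    intro j hj
    rw [mem_Icc] at hj
    have e1 : Icc 2 b = Ioc 1 b := by ext i; simp only [mem_Icc, mem_Ioc]; omega
    have e2 : Icc 2 (j - 1) = Ioc 1 (j - 1) := by ext i; simp only [mem_Icc, mem_Ioc]; omega
    have e3 : Icc (j + 1) b = Ioc j b := by ext i; simp only [mem_Icc, mem_Ioc]; omega
    have e4 : Ioc (j - 1) j = {j} := by ext i; simp only [mem_Ioc, mem_singleton]; omega
    rw [e1, e2, e3,
      ← Finset.sum_Ioc_consecutive (fun k => F j k) (by omega : 1 ≤ j - 1) (by omega : j - 1 ≤ b),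
      ← Finset.sum_Ioc_consecutive (fun k => F j k) (by omega : j - 1 ≤ j)
        (by omega : j ≤ b)]
    · rw [e4, Finset.sum_singleton]
      ring
  rw [Finset.sum_congr rfl hin]
  have hT1 : ∑ j ∈ Icc 2 b, ∑ k ∈ Icc 2 (j - 1), F j k
      = ∑ j ∈ Icc 2 b, ∑ k ∈ Icc (j + 1) b, F j k := by
    rw [Finset.sum_comm' (t' := Icc 2 b) (s' := fun y => Icc (y + 1) b)
      (by intro x y; simp only [mem_Icc]; omega)]
    exact Finset.sum_congr rfl fun y _ => Finset.sum_congr rfl fun x _ => hsym x y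
  simp only [Finset.sum_add_distrib]
  rw [hT1]
  ring

/-- **Variances and covariance of the two estimators under homoskedastic errors in Setting (B).** -/
theorem stmt_16
    {Ω : Type*} [MeasureSpace Ω] [IsProbabilityMeasure (ℙ : Measure Ω)]
    (J : ℕ) (hJ : 3 ≤ J)
    (μc β τsq : ℝ) (θ : ℕ → ℝ) (σsq : ℕ → ℕ → ℝ)
    (α : ℕ → Ω → ℝ) (ε : ℕ → ℕ → Ω → ℝ)
    (hmα : ∀ i, Measurable (α i)) (hmε : ∀ i j, Measurable (ε i j))
    -- the random variables {α_i} ∪ {ε_{i,j}} are mutually independent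
    (hindep : iIndepFun
      (fun x : {x : ℕ ⊕ ℕ × ℕ // (∀ i, x = Sum.inl i → i ∈ Icc 1 (J - 1)) ∧
          (∀ i j, x = Sum.inr (i, j) → i ∈ Icc 1 (J - 1) ∧ j ∈ Icc 1 J)} =>
        Sum.elim α (fun q => ε q.1 q.2) x.1) ℙ)
    -- moment assumptions
    (hEα : ∀ i ∈ Icc 1 (J - 1), ∫ ω, α i ω ∂ℙ = 0)
    (hVα : ∀ i ∈ Icc 1 (J - 1), variance (α i) ℙ = τsq)
    (hL2α : ∀ i ∈ Icc 1 (J - 1), MemLp (α i) 2 ℙ)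
    (hEε : ∀ i ∈ Icc 1 (J - 1), ∀ j ∈ Icc 1 J, ∫ ω, ε i j ω ∂ℙ = 0)
    (hVε : ∀ i ∈ Icc 1 (J - 1), ∀ j ∈ Icc 1 J, variance (ε i j) ℙ = σsq i j)
    (hL2ε : ∀ i ∈ Icc 1 (J - 1), ∀ j ∈ Icc 1 J, MemLp (ε i j) 2 ℙ)
    -- the mixed effects model: cluster i is on intervention in periods j > i
    (Y : ℕ → ℕ → Ω → ℝ)
    (hY : ∀ i j ω, Y i j ω = μc + α i ω + θ j + (if i < j then β else 0) + ε i j ω)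
    -- the within-period contrast A_j
    (A : ℕ → Ω → ℝ)
    (hA : ∀ j ω, A j ω = ((j : ℝ) - 1)⁻¹ * ∑ i ∈ Icc 1 (j - 1), Y i j ω
        - ((J : ℝ) - (j : ℝ))⁻¹ * ∑ i ∈ Icc j (J - 1), Y i j ω)
    -- the crossover contrast B_j
    (B : ℕ → Ω → ℝ)
    (hB : ∀ j ω, B j ω = Y (j - 1) j ω - Y (j - 1) (j - 1) ω
        - ((J : ℝ) - (j : ℝ))⁻¹ * ∑ l ∈ Icc j (J - 1), (Y l j ω - Y l (j - 1) ω))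
    -- the non-parametric within-period estimator with deterministic weights v
    (v : ℕ → ℝ) (βNPWP : Ω → ℝ)
    (hNPWP : ∀ ω, βNPWP ω = ∑ j ∈ Icc 2 (J - 1), v j * A j ω)
    -- the crossover estimator with deterministic weights w
    (w : ℕ → ℝ) (βCO : Ω → ℝ)
    (hCO : ∀ ω, βCO ω = ∑ j ∈ Icc 2 (J - 1), w j * B j ω)
    -- homoskedastic errors
    (σ2 : ℝ) (hσ : ∀ i ∈ Icc 1 (J - 1), ∀ j ∈ Icc 1 J, σsq i j = σ2)
    :
    variance βNPWP ℙ
        = (τsq + σ2) * ∑ j ∈ Icc 2 (J - 1), (v j) ^ 2 *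
              (((j : ℝ) - 1)⁻¹ + ((J : ℝ) - (j : ℝ))⁻¹)
          + 2 * τsq * ∑ j ∈ Icc 2 (J - 2), ∑ k ∈ Icc (j + 1) (J - 1),
              v j * v k * ((J : ℝ) - 1) / (((J : ℝ) - (j : ℝ)) * ((k : ℝ) - 1))
      ∧ variance βCO ℙ
        = 2 * σ2 * ∑ j ∈ Icc 2 (J - 1), (w j) ^ 2 * (1 + ((J : ℝ) - (j : ℝ))⁻¹)
      ∧ covar βNPWP βCO
        = σ2 * ∑ j ∈ Icc 2 (J - 1), v j * w j *
            (((j : ℝ) - 1)⁻¹ + ((J : ℝ) - (j : ℝ))⁻¹) := by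
  classical
  set Sfin : Finset (ℕ ⊕ ℕ × ℕ) := (Icc 1 (J - 1)).disjSum ((Icc 1 (J - 1)) ×ˢ (Icc 1 J))
    with hSfin
  set Z : (ℕ ⊕ ℕ × ℕ) → Ω → ℝ := Sum.elim α (fun q => ε q.1 q.2) with hZdef
  set cA : ℕ → (ℕ ⊕ ℕ × ℕ) → ℝ := fun j => Sum.elim (fun i => dcoef J j i)
      (fun q => if q.2 = j then dcoef J j q.1 else 0) with hcA
  set cB : ℕ → (ℕ ⊕ ℕ × ℕ) → ℝ := fun j => Sum.elim (fun _ => 0)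
      (fun q => (if q.2 = j then ecoef J j q.1 else 0)
        - (if q.2 = j - 1 then ecoef J j q.1 else 0)) with hcB
  set V : (ℕ ⊕ ℕ × ℕ) → ℝ := Sum.elim (fun _ => τsq) (fun _ => σ2) with hV
  set PN : (ℕ ⊕ ℕ × ℕ) → ℝ := fun x => ∑ j ∈ Icc 2 (J - 1), v j * cA j x with hPN
  set PC : (ℕ ⊕ ℕ × ℕ) → ℝ := fun x => ∑ j ∈ Icc 2 (J - 1), w j * cB j x with hPC
  -- L² of the basic variables
  have hZL2 : ∀ x ∈ Sfin, MemLp (Z x) 2 ℙ := by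
    intro x hx
    rcases x with i | ⟨i, j⟩
    · rw [hSfin, Finset.inl_mem_disjSum] at hx
      exact hL2α i hx
    · rw [hSfin, Finset.inr_mem_disjSum, Finset.mem_product] at hx
      exact hL2ε i hx.1 j hx.2
  -- pairwise independence
  have hZind : ∀ x ∈ Sfin, ∀ y ∈ Sfin, x ≠ y → IndepFun (Z x) (Z y) ℙ := by
    intro x hx y hy hxy
    have hmem : ∀ z ∈ Sfin, (∀ i, z = Sum.inl i → i ∈ Icc 1 (J - 1)) ∧
        (∀ i j, z = Sum.inr (i, j) → i ∈ Icc 1 (J - 1) ∧ j ∈ Icc 1 J) := by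
      intro z hz
      rcases z with i | ⟨i, j⟩
      · rw [hSfin, Finset.inl_mem_disjSum] at hz
        refine ⟨fun i' h => ?_, fun i' j' h => by simp at h⟩
        obtain rfl : i = i' := by injection h
        exact hz
      · rw [hSfin, Finset.inr_mem_disjSum, Finset.mem_product] at hz
        refine ⟨fun i' h => by simp at h, fun i' j' h => ?_⟩
        obtain ⟨rfl, rfl⟩ : i = i' ∧ j = j' := by
          have := Sum.inr.inj h; exact ⟨congrArg Prod.fst this, congrArg Prod.snd this⟩
        exact hz
    exact hindep.indepFun
      (i := ⟨x, hmem x hx⟩) (j := ⟨y, hmem y hy⟩)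
      (fun h => hxy (congrArg Subtype.val h))
  -- variances of the basic variables
  have hZV : ∀ x ∈ Sfin, variance (Z x) ℙ = V x := by
    intro x hx
    rcases x with i | ⟨i, j⟩
    · rw [hSfin, Finset.inl_mem_disjSum] at hx
      simp only [hZdef, hV, Sum.elim_inl]
      exact hVα i hx
    · rw [hSfin, Finset.inr_mem_disjSum, Finset.mem_product] at hx
      simp only [hZdef, hV, Sum.elim_inr]
      rw [hVε i hx.1 j hx.2]
      exact hσ i hx.1 j hx.2
  -- representation of A_j
  have hrepA : ∀ j ∈ Icc 2 (J - 1), ∀ ω, A j ω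
      = (((j : ℝ) - 1)⁻¹ * (∑ _i ∈ Icc 1 (j - 1), (μc + θ j + β))
          - ((J : ℝ) - (j : ℝ))⁻¹ * (∑ _i ∈ Icc j (J - 1), (μc + θ j)))
        + ∑ x ∈ Sfin, cA j x * Z x ω := by
    intro j hj ω
    rw [mem_Icc] at hj
    obtain ⟨hj2, hjJ⟩ := hj
    have hjm : j ∈ Icc 1 J := by rw [mem_Icc]; omega
    have hsum : ∑ x ∈ Sfin, cA j x * Z x ω
        = ∑ i ∈ Icc 1 (J - 1), dcoef J j i * α i ω
          + ∑ i ∈ Icc 1 (J - 1), dcoef J j i * ε i j ω := by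
      rw [hSfin]
      simp only [hcA, hZdef]
      rw [Finset.sum_disjSum, Finset.sum_product]
      simp only [Sum.elim_inl, Sum.elim_inr]
      congr 1
      refine Finset.sum_congr rfl fun i _ => ?_
      have e : ∀ j' : ℕ, (if j' = j then dcoef J j i else 0) * ε i j' ω
          = (if j' = j then dcoef J j i * ε i j' ω else 0) := fun j' => by
        split_ifs <;> ring
      rw [Finset.sum_congr rfl fun j' _ => e j',
        Finset.sum_ite_eq' (Icc 1 J) j (fun j' => dcoef J j i * ε i j' ω), if_pos hjm]
    have hsplitA : ∀ g : ℕ → ℝ, ∑ i ∈ Icc 1 (J - 1), dcoef J j i * g i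
        = ((j : ℝ) - 1)⁻¹ * (∑ i ∈ Icc 1 (j - 1), g i)
          + (-(((J : ℝ) - (j : ℝ))⁻¹)) * (∑ i ∈ Icc j (J - 1), g i) := by
      intro g
      have e2 : Icc j (J - 1) = Ioc (j - 1) (J - 1) := by
        ext i; simp only [mem_Icc, mem_Ioc]; omega
      rw [Icc_one_Ioc, split2 0 (j - 1) (J - 1) (by omega) (by omega)]
      have p1 : ∑ i ∈ Ioc 0 (j - 1), dcoef J j i * g i
          = ∑ i ∈ Ioc 0 (j - 1), ((j : ℝ) - 1)⁻¹ * g i :=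
        Finset.sum_congr rfl fun i hi => by rw [dcoef, if_pos (mem_Ioc.mp hi).2]
      have p2 : ∑ i ∈ Ioc (j - 1) (J - 1), dcoef J j i * g i
          = ∑ i ∈ Ioc (j - 1) (J - 1), (-(((J : ℝ) - (j : ℝ))⁻¹)) * g i :=
        Finset.sum_congr rfl fun i hi => by
          rw [dcoef, if_neg (by have := (mem_Ioc.mp hi).1; omega)]
      rw [p1, p2, ← Finset.mul_sum, ← Finset.mul_sum, ← Icc_one_Ioc, ← e2]
    have h1 : ∑ i ∈ Icc 1 (J - 1), dcoef J j i * α i ω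
        = ((j : ℝ) - 1)⁻¹ * (∑ i ∈ Icc 1 (j - 1), α i ω)
          + (-(((J : ℝ) - (j : ℝ))⁻¹)) * (∑ i ∈ Icc j (J - 1), α i ω) :=
      hsplitA (fun i => α i ω)
    have h2 : ∑ i ∈ Icc 1 (J - 1), dcoef J j i * ε i j ω
        = ((j : ℝ) - 1)⁻¹ * (∑ i ∈ Icc 1 (j - 1), ε i j ω)
          + (-(((J : ℝ) - (j : ℝ))⁻¹)) * (∑ i ∈ Icc j (J - 1), ε i j ω) :=
      hsplitA (fun i => ε i j ω)
    have hY1 : ∑ i ∈ Icc 1 (j - 1), Y i j ω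
        = (∑ _i ∈ Icc 1 (j - 1), (μc + θ j + β))
          + ((∑ i ∈ Icc 1 (j - 1), α i ω) + ∑ i ∈ Icc 1 (j - 1), ε i j ω) := by
      rw [← Finset.sum_add_distrib, ← Finset.sum_add_distrib]
      refine Finset.sum_congr rfl fun i hi => ?_
      rw [mem_Icc] at hi
      rw [hY i j ω, if_pos (by omega)]
      ring
    have hY2 : ∑ i ∈ Icc j (J - 1), Y i j ω
        = (∑ _i ∈ Icc j (J - 1), (μc + θ j))
          + ((∑ i ∈ Icc j (J - 1), α i ω) + ∑ i ∈ Icc j (J - 1), ε i j ω) := by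
      rw [← Finset.sum_add_distrib, ← Finset.sum_add_distrib]
      refine Finset.sum_congr rfl fun i hi => ?_
      rw [mem_Icc] at hi
      rw [hY i j ω, if_neg (by omega)]
      ring
    rw [hA j ω, hY1, hY2, hsum, h1, h2]
    ring
  -- representation of B_j
  have hrepB : ∀ j ∈ Icc 2 (J - 1), ∀ ω, B j ω
      = ((θ j + β - θ (j - 1))
          - ((J : ℝ) - (j : ℝ))⁻¹ * (∑ _l ∈ Icc j (J - 1), (θ j - θ (j - 1))))
        + ∑ x ∈ Sfin, cB j x * Z x ω := by
    intro j hj ω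
    rw [mem_Icc] at hj
    obtain ⟨hj2, hjJ⟩ := hj
    have hjm : j ∈ Icc 1 J := by rw [mem_Icc]; omega
    have hjm' : j - 1 ∈ Icc 1 J := by rw [mem_Icc]; omega
    have hsum : ∑ x ∈ Sfin, cB j x * Z x ω
        = ∑ i ∈ Icc 1 (J - 1), ecoef J j i * (ε i j ω - ε i (j - 1) ω) := by
      rw [hSfin]
      simp only [hcB, hZdef]
      rw [Finset.sum_disjSum, Finset.sum_product]
      simp only [Sum.elim_inl, Sum.elim_inr, zero_mul]
      rw [Finset.sum_const_zero, zero_add]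
      refine Finset.sum_congr rfl fun i _ => ?_
      have e : ∀ j' : ℕ, ((if j' = j then ecoef J j i else 0)
            - (if j' = j - 1 then ecoef J j i else 0)) * ε i j' ω
          = (if j' = j then ecoef J j i * ε i j' ω else 0)
            - (if j' = j - 1 then ecoef J j i * ε i j' ω else 0) := fun j' => by
        split_ifs <;> ring
      rw [Finset.sum_congr rfl fun j' _ => e j', Finset.sum_sub_distrib,
        Finset.sum_ite_eq' (Icc 1 J) j (fun j' => ecoef J j i * ε i j' ω),
        Finset.sum_ite_eq' (Icc 1 J) (j - 1) (fun j' => ecoef J j i * ε i j' ω),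
        if_pos hjm, if_pos hjm']
      ring
    have hsB : ∀ g : ℕ → ℝ, ∑ i ∈ Icc 1 (J - 1), ecoef J j i * g i
        = g (j - 1) + (-(((J : ℝ) - (j : ℝ))⁻¹)) * (∑ i ∈ Icc j (J - 1), g i) := by
      intro g
      have e2 : Icc j (J - 1) = Ioc (j - 1) (J - 1) := by
        ext i; simp only [mem_Icc, mem_Ioc]; omega
      have e4 : Ioc (j - 2) (j - 1) = {j - 1} := by
        ext i; simp only [mem_Ioc, mem_singleton]; omega
      rw [Icc_one_Ioc, split3 0 (j - 2) (j - 1) (J - 1) (by omega) (by omega) (by omega)]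
      have p1 : ∑ i ∈ Ioc 0 (j - 2), ecoef J j i * g i = 0 :=
        Finset.sum_eq_zero fun i hi => by
          have := mem_Ioc.mp hi
          rw [ecoef, if_neg (by omega), if_neg (by omega), zero_mul]
      have p2 : ∑ i ∈ Ioc (j - 2) (j - 1), ecoef J j i * g i = g (j - 1) := by
        rw [e4, Finset.sum_singleton, ecoef, if_pos rfl, one_mul]
      have p3 : ∑ i ∈ Ioc (j - 1) (J - 1), ecoef J j i * g i
          = (-(((J : ℝ) - (j : ℝ))⁻¹)) * (∑ i ∈ Icc j (J - 1), g i) := by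
        rw [e2, Finset.mul_sum]
        refine Finset.sum_congr rfl fun i hi => ?_
        have := mem_Ioc.mp hi
        rw [ecoef, if_neg (by omega), if_pos (by omega)]
      rw [p1, p2, p3, zero_add]
    have h1 : ∑ i ∈ Icc 1 (J - 1), ecoef J j i * (ε i j ω - ε i (j - 1) ω)
        = (ε (j - 1) j ω - ε (j - 1) (j - 1) ω)
          + (-(((J : ℝ) - (j : ℝ))⁻¹)) * (∑ i ∈ Icc j (J - 1), (ε i j ω - ε i (j - 1) ω)) :=
      hsB (fun i => ε i j ω - ε i (j - 1) ω)
    have hY1 : Y (j - 1) j ω - Y (j - 1) (j - 1) ω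
        = (θ j + β - θ (j - 1)) + (ε (j - 1) j ω - ε (j - 1) (j - 1) ω) := by
      rw [hY, hY, if_pos (by omega), if_neg (by omega)]
      ring
    have hY2 : ∑ l ∈ Icc j (J - 1), (Y l j ω - Y l (j - 1) ω)
        = (∑ _l ∈ Icc j (J - 1), (θ j - θ (j - 1)))
          + ∑ l ∈ Icc j (J - 1), (ε l j ω - ε l (j - 1) ω) := by
      rw [← Finset.sum_add_distrib]
      refine Finset.sum_congr rfl fun l hl => ?_
      rw [mem_Icc] at hl
      rw [hY, hY, if_neg (by omega), if_neg (by omega)]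
      ring
    rw [hB j ω, hY1, hY2, hsum, h1]
    ring
  -- representation of the estimators
  have hrepN : ∀ ω, βNPWP ω
      = (∑ j ∈ Icc 2 (J - 1), v j * (((j : ℝ) - 1)⁻¹ * (∑ _i ∈ Icc 1 (j - 1), (μc + θ j + β))
          - ((J : ℝ) - (j : ℝ))⁻¹ * (∑ _i ∈ Icc j (J - 1), (μc + θ j))))
        + ∑ x ∈ Sfin, PN x * Z x ω := by
    intro ω
    rw [hNPWP ω, Finset.sum_congr rfl fun j hj => by rw [hrepA j hj ω]]
    simp only [mul_add]
    rw [Finset.sum_add_distrib]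
    congr 1
    simp only [Finset.mul_sum]
    rw [Finset.sum_comm]
    refine Finset.sum_congr rfl fun x hx => ?_
    simp only [hPN]
    rw [Finset.sum_mul]
    exact Finset.sum_congr rfl fun j hj => by ring
  have hrepC : ∀ ω, βCO ω
      = (∑ j ∈ Icc 2 (J - 1), w j * ((θ j + β - θ (j - 1))
          - ((J : ℝ) - (j : ℝ))⁻¹ * (∑ _l ∈ Icc j (J - 1), (θ j - θ (j - 1)))))
        + ∑ x ∈ Sfin, PC x * Z x ω := by
    intro ω
    rw [hCO ω, Finset.sum_congr rfl fun j hj => by rw [hrepB j hj ω]]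
    simp only [mul_add]
    rw [Finset.sum_add_distrib]
    congr 1
    simp only [Finset.mul_sum]
    rw [Finset.sum_comm]
    refine Finset.sum_congr rfl fun x hx => ?_
    simp only [hPC]
    rw [Finset.sum_mul]
    exact Finset.sum_congr rfl fun j hj => by ring
  -- L² of the estimators
  have hMN : MemLp βNPWP 2 ℙ := by
    rw [show βNPWP = fun ω => _ + ∑ x ∈ Sfin, PN x * Z x ω from funext hrepN]
    exact (memLp_const (_ : ℝ)).add (memLp_finsetSum Sfin fun x hx => ((hZL2 x hx).const_mul _))
  have hMC : MemLp βCO 2 ℙ := by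
    rw [show βCO = fun ω => _ + ∑ x ∈ Sfin, PC x * Z x ω from funext hrepC]
    exact (memLp_const (_ : ℝ)).add (memLp_finsetSum Sfin fun x hx => ((hZL2 x hx).const_mul _))
  -- covariances via the key lemma
  have hNN : covar βNPWP βNPWP = ∑ x ∈ Sfin, PN x * PN x * V x := by
    rw [covar_sum_sum Sfin Z hZL2 hZind PN PN _ _ βNPWP βNPWP hrepN hrepN]
    exact Finset.sum_congr rfl fun x hx => by rw [hZV x hx]
  have hCC : covar βCO βCO = ∑ x ∈ Sfin, PC x * PC x * V x := by
    rw [covar_sum_sum Sfin Z hZL2 hZind PC PC _ _ βCO βCO hrepC hrepC]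
    exact Finset.sum_congr rfl fun x hx => by rw [hZV x hx]
  have hNC : covar βNPWP βCO = ∑ x ∈ Sfin, PN x * PC x * V x := by
    rw [covar_sum_sum Sfin Z hZL2 hZind PN PC _ _ βNPWP βCO hrepN hrepC]
    exact Finset.sum_congr rfl fun x hx => by rw [hZV x hx]
  -- double-sum expansion
  have hexp : ∀ (u u' : ℕ → ℝ) (c c' : ℕ → (ℕ ⊕ ℕ × ℕ) → ℝ),
      ∑ x ∈ Sfin, (∑ j ∈ Icc 2 (J - 1), u j * c j x) * (∑ k ∈ Icc 2 (J - 1), u' k * c' k x) * V x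
        = ∑ j ∈ Icc 2 (J - 1), ∑ k ∈ Icc 2 (J - 1),
            u j * u' k * (∑ x ∈ Sfin, c j x * c' k x * V x) := by
    intro u u' c c'
    have h1 : ∀ x : ℕ ⊕ ℕ × ℕ,
        (∑ j ∈ Icc 2 (J - 1), u j * c j x) * (∑ k ∈ Icc 2 (J - 1), u' k * c' k x) * V x
        = ∑ j ∈ Icc 2 (J - 1), ∑ k ∈ Icc 2 (J - 1), u j * u' k * (c j x * c' k x * V x) := by
      intro x
      rw [Finset.sum_mul_sum, Finset.sum_mul]
      refine Finset.sum_congr rfl fun j _ => ?_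
      rw [Finset.sum_mul]
      exact Finset.sum_congr rfl fun k _ => by ring
    rw [Finset.sum_congr rfl fun x _ => h1 x, Finset.sum_comm]
    refine Finset.sum_congr rfl fun j _ => ?_
    rw [Finset.sum_comm]
    refine Finset.sum_congr rfl fun k _ => ?_
    rw [← Finset.mul_sum]
  -- kernel evaluations
  have hAA : ∀ j ∈ Icc 2 (J - 1), ∀ k ∈ Icc 2 (J - 1),
      ∑ x ∈ Sfin, cA j x * cA k x * V x
        = τsq * (∑ i ∈ Icc 1 (J - 1), dcoef J j i * dcoef J k i)
          + (if j = k then σ2 * (∑ i ∈ Icc 1 (J - 1), dcoef J j i * dcoef J k i) else 0) := by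
    intro j hj k hk
    rw [mem_Icc] at hj hk
    have hjm : j ∈ Icc 1 J := by rw [mem_Icc]; omega
    rw [hSfin]
    simp only [hcA, hV]
    rw [Finset.sum_disjSum, Finset.sum_product]
    simp only [Sum.elim_inl, Sum.elim_inr]
    have p1 : ∑ i ∈ Icc 1 (J - 1), dcoef J j i * dcoef J k i * τsq
        = τsq * ∑ i ∈ Icc 1 (J - 1), dcoef J j i * dcoef J k i := by
      rw [Finset.mul_sum]
      exact Finset.sum_congr rfl fun i _ => by ring
    have p2 : ∑ i ∈ Icc 1 (J - 1), ∑ j' ∈ Icc 1 J,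
          (if j' = j then dcoef J j i else 0) * (if j' = k then dcoef J k i else 0) * σ2
        = (if j = k then σ2 * ∑ i ∈ Icc 1 (J - 1), dcoef J j i * dcoef J k i else 0) := by
      have hinner : ∀ i : ℕ, ∑ j' ∈ Icc 1 J,
            (if j' = j then dcoef J j i else 0) * (if j' = k then dcoef J k i else 0) * σ2
          = (if j = k then dcoef J j i * dcoef J k i * σ2 else 0) := by
        intro i
        have e : ∀ j' : ℕ,
            (if j' = j then dcoef J j i else 0) * (if j' = k then dcoef J k i else 0) * σ2
            = (if j' = j then (if j' = k then dcoef J j i * dcoef J k i * σ2 else 0) else 0) :=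
          fun j' => by split_ifs <;> ring
        rw [Finset.sum_congr rfl fun j' _ => e j',
          Finset.sum_ite_eq' (Icc 1 J) j
            (fun j' => if j' = k then dcoef J j i * dcoef J k i * σ2 else 0), if_pos hjm]
      rw [Finset.sum_congr rfl fun i _ => hinner i]
      by_cases hjk : j = k
      · simp only [if_pos hjk]
        rw [Finset.mul_sum]
        exact Finset.sum_congr rfl fun i _ => by ring
      · simp only [if_neg hjk, Finset.sum_const_zero]
    rw [p1, p2]
  have hBB : ∀ j ∈ Icc 2 (J - 1), ∀ k ∈ Icc 2 (J - 1),
      ∑ x ∈ Sfin, cB j x * cB k x * V x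
        = (if j = k then 2 * σ2 * (1 + ((J : ℝ) - (j : ℝ))⁻¹) else 0) := by
    intro j hj k hk
    rw [mem_Icc] at hj hk
    have hjm : j ∈ Icc 1 J := by rw [mem_Icc]; omega
    have hjm' : j - 1 ∈ Icc 1 J := by rw [mem_Icc]; omega
    rw [hSfin]
    simp only [hcB, hV]
    rw [Finset.sum_disjSum, Finset.sum_product]
    simp only [Sum.elim_inl, Sum.elim_inr, zero_mul, mul_zero]
    rw [Finset.sum_const_zero, zero_add]
    have hinner : ∀ i : ℕ, ∑ j' ∈ Icc 1 J,
          ((if j' = j then ecoef J j i else 0) - (if j' = j - 1 then ecoef J j i else 0))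
            * ((if j' = k then ecoef J k i else 0) - (if j' = k - 1 then ecoef J k i else 0)) * σ2
        = (if j = k then ecoef J j i * ecoef J k i * σ2 else 0)
          - (if j = k - 1 then ecoef J j i * ecoef J k i * σ2 else 0)
          - (if j - 1 = k then ecoef J j i * ecoef J k i * σ2 else 0)
          + (if j - 1 = k - 1 then ecoef J j i * ecoef J k i * σ2 else 0) := by
      intro i
      have e : ∀ j' : ℕ,
          ((if j' = j then ecoef J j i else 0) - (if j' = j - 1 then ecoef J j i else 0))
            * ((if j' = k then ecoef J k i else 0) - (if j' = k - 1 then ecoef J k i else 0)) * σ2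
          = (if j' = j then (if j' = k then ecoef J j i * ecoef J k i * σ2 else 0) else 0)
            - (if j' = j then (if j' = k - 1 then ecoef J j i * ecoef J k i * σ2 else 0) else 0)
            - (if j' = j - 1 then (if j' = k then ecoef J j i * ecoef J k i * σ2 else 0) else 0)
            + (if j' = j - 1 then (if j' = k - 1 then ecoef J j i * ecoef J k i * σ2 else 0) else 0) :=
        fun j' => by split_ifs <;> ring
      rw [Finset.sum_congr rfl fun j' _ => e j']
      rw [Finset.sum_add_distrib, Finset.sum_sub_distrib, Finset.sum_sub_distrib,
        Finset.sum_ite_eq' (Icc 1 J) j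
          (fun j' => if j' = k then ecoef J j i * ecoef J k i * σ2 else 0),
        Finset.sum_ite_eq' (Icc 1 J) j
          (fun j' => if j' = k - 1 then ecoef J j i * ecoef J k i * σ2 else 0),
        Finset.sum_ite_eq' (Icc 1 J) (j - 1)
          (fun j' => if j' = k then ecoef J j i * ecoef J k i * σ2 else 0),
        Finset.sum_ite_eq' (Icc 1 J) (j - 1)
          (fun j' => if j' = k - 1 then ecoef J j i * ecoef J k i * σ2 else 0),
        if_pos hjm, if_pos hjm', if_pos hjm, if_pos hjm']
    rw [Finset.sum_congr rfl fun i _ => hinner i]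
    by_cases h1 : j = k
    · subst h1
      simp only [if_pos rfl, if_true, if_neg (show ¬ j = j - 1 by omega),
        if_neg (show ¬ j - 1 = j by omega)]
      have : ∑ i ∈ Icc 1 (J - 1),
            (ecoef J j i * ecoef J j i * σ2 - 0 - 0 + ecoef J j i * ecoef J j i * σ2)
          = 2 * σ2 * ∑ i ∈ Icc 1 (J - 1), ecoef J j i * ecoef J j i := by
        rw [Finset.mul_sum]
        exact Finset.sum_congr rfl fun i _ => by ring
      rw [this, See_diag hJ hj.1 hj.2]
    · rw [if_neg h1]
      by_cases h2 : j = k - 1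
      · have hk1 : k = j + 1 := by omega
        subst hk1
        simp only [if_neg h1, if_pos h2, if_true, if_neg (show ¬ j - 1 = j + 1 by omega),
          if_neg (show ¬ j - 1 = j + 1 - 1 by omega)]
        have : ∑ i ∈ Icc 1 (J - 1),
              (0 - ecoef J j i * ecoef J (j + 1) i * σ2 - 0 + 0)
            = -(σ2 * ∑ i ∈ Icc 1 (J - 1), ecoef J j i * ecoef J (j + 1) i) := by
          rw [Finset.mul_sum, ← Finset.sum_neg_distrib]
          exact Finset.sum_congr rfl fun i _ => by ring
        rw [this, See_succ hJ hj.1 hk.2]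
        ring
      · by_cases h3 : j - 1 = k
        · have hj1 : j = k + 1 := by omega
          subst hj1
          simp only [if_neg h1, if_neg h2, if_pos h3, if_true,
            if_neg (show ¬ k + 1 - 1 = k - 1 by omega)]
          have : ∑ i ∈ Icc 1 (J - 1),
                (0 - 0 - ecoef J (k + 1) i * ecoef J k i * σ2 + 0)
              = -(σ2 * ∑ i ∈ Icc 1 (J - 1), ecoef J k i * ecoef J (k + 1) i) := by
            rw [Finset.mul_sum, ← Finset.sum_neg_distrib]
            exact Finset.sum_congr rfl fun i _ => by ring
          rw [this, See_succ hJ hk.1 hj.2]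
          ring
        · have h4 : ¬ j - 1 = k - 1 := by omega
          simp only [if_neg h1, if_neg h2, if_neg h3, if_neg h4]
          simp
  have hAB : ∀ j ∈ Icc 2 (J - 1), ∀ k ∈ Icc 2 (J - 1),
      ∑ x ∈ Sfin, cA j x * cB k x * V x
        = (if j = k then σ2 * (((j : ℝ) - 1)⁻¹ + ((J : ℝ) - (j : ℝ))⁻¹) else 0) := by
    intro j hj k hk
    rw [mem_Icc] at hj hk
    have hjm : j ∈ Icc 1 J := by rw [mem_Icc]; omega
    rw [hSfin]
    simp only [hcA, hcB, hV]
    rw [Finset.sum_disjSum, Finset.sum_product]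
    simp only [Sum.elim_inl, Sum.elim_inr, mul_zero, zero_mul]
    rw [Finset.sum_const_zero, zero_add]
    have hinner : ∀ i : ℕ, ∑ j' ∈ Icc 1 J,
          (if j' = j then dcoef J j i else 0)
            * ((if j' = k then ecoef J k i else 0) - (if j' = k - 1 then ecoef J k i else 0)) * σ2
        = (if j = k then dcoef J j i * ecoef J k i * σ2 else 0)
          - (if j = k - 1 then dcoef J j i * ecoef J k i * σ2 else 0) := by
      intro i
      have e : ∀ j' : ℕ,
          (if j' = j then dcoef J j i else 0)
            * ((if j' = k then ecoef J k i else 0) - (if j' = k - 1 then ecoef J k i else 0)) * σ2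
          = (if j' = j then (if j' = k then dcoef J j i * ecoef J k i * σ2 else 0) else 0)
            - (if j' = j then (if j' = k - 1 then dcoef J j i * ecoef J k i * σ2 else 0) else 0) :=
        fun j' => by split_ifs <;> ring
      rw [Finset.sum_congr rfl fun j' _ => e j', Finset.sum_sub_distrib,
        Finset.sum_ite_eq' (Icc 1 J) j
          (fun j' => if j' = k then dcoef J j i * ecoef J k i * σ2 else 0),
        Finset.sum_ite_eq' (Icc 1 J) j
          (fun j' => if j' = k - 1 then dcoef J j i * ecoef J k i * σ2 else 0),
        if_pos hjm, if_pos hjm]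
    rw [Finset.sum_congr rfl fun i _ => hinner i]
    by_cases h1 : j = k
    · subst h1
      simp only [if_pos rfl, if_true, if_neg (show ¬ j = j - 1 by omega)]
      have : ∑ i ∈ Icc 1 (J - 1), (dcoef J j i * ecoef J j i * σ2 - 0)
          = σ2 * ∑ i ∈ Icc 1 (J - 1), dcoef J j i * ecoef J j i := by
        rw [Finset.mul_sum]
        exact Finset.sum_congr rfl fun i _ => by ring
      rw [this, Sde_diag hJ hj.1 hj.2]
    · rw [if_neg h1]
      by_cases h2 : j = k - 1
      · have hk1 : k = j + 1 := by omega
        subst hk1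
        simp only [if_neg h1, if_pos h2, if_true]
        have : ∑ i ∈ Icc 1 (J - 1), (0 - dcoef J j i * ecoef J (j + 1) i * σ2)
            = -(σ2 * ∑ i ∈ Icc 1 (J - 1), dcoef J j i * ecoef J (j + 1) i) := by
          rw [Finset.mul_sum, ← Finset.sum_neg_distrib]
          exact Finset.sum_congr rfl fun i _ => by ring
        rw [this, Sde_succ hJ hj.1 hk.2]
        ring
      · simp only [if_neg h1, if_neg h2]
        simp
  
  -- final assembly
  refine ⟨?_, ?_, ?_⟩
  · -- variance of the NPWP estimator
    rw [variance_eq_covar βNPWP hMN, hNN]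
    have e1 : ∑ x ∈ Sfin, PN x * PN x * V x
        = ∑ j ∈ Icc 2 (J - 1), ∑ k ∈ Icc 2 (J - 1),
            v j * v k * (∑ x ∈ Sfin, cA j x * cA k x * V x) := by
      have h0 : ∀ x : ℕ ⊕ ℕ × ℕ, PN x * PN x * V x
          = (∑ j ∈ Icc 2 (J - 1), v j * cA j x) * (∑ k ∈ Icc 2 (J - 1), v k * cA k x) * V x :=
        fun x => by simp only [hPN]
      rw [Finset.sum_congr rfl fun x _ => h0 x]
      exact hexp v v cA cA
    rw [e1]
    have hsymF : ∀ j k : ℕ, v j * v k * (∑ x ∈ Sfin, cA j x * cA k x * V x)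
        = v k * v j * (∑ x ∈ Sfin, cA k x * cA j x * V x) := by
      intro j k
      rw [show (∑ x ∈ Sfin, cA k x * cA j x * V x) = ∑ x ∈ Sfin, cA j x * cA k x * V x from
        Finset.sum_congr rfl fun x _ => by ring]
      ring
    have e2 : ∑ j ∈ Icc 2 (J - 1), ∑ k ∈ Icc 2 (J - 1),
          v j * v k * (∑ x ∈ Sfin, cA j x * cA k x * V x)
        = (∑ j ∈ Icc 2 (J - 1), v j * v j * (∑ x ∈ Sfin, cA j x * cA j x * V x))
          + 2 * ∑ j ∈ Icc 2 (J - 1), ∑ k ∈ Icc (j + 1) (J - 1),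
              v j * v k * (∑ x ∈ Sfin, cA j x * cA k x * V x) :=
      sum_sq_split (J - 1) _ hsymF
    rw [e2]
    have ediag : ∑ j ∈ Icc 2 (J - 1), v j * v j * (∑ x ∈ Sfin, cA j x * cA j x * V x)
        = (τsq + σ2) * ∑ j ∈ Icc 2 (J - 1),
            (v j) ^ 2 * (((j : ℝ) - 1)⁻¹ + ((J : ℝ) - (j : ℝ))⁻¹) := by
      rw [Finset.mul_sum]
      refine Finset.sum_congr rfl fun j hj => ?_
      have hj' := mem_Icc.mp hj
      rw [hAA j hj j hj, if_pos rfl, Sdd_diag hJ hj'.1 hj'.2]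
      ring
    have eoff : ∑ j ∈ Icc 2 (J - 1), ∑ k ∈ Icc (j + 1) (J - 1),
          v j * v k * (∑ x ∈ Sfin, cA j x * cA k x * V x)
        = ∑ j ∈ Icc 2 (J - 2), ∑ k ∈ Icc (j + 1) (J - 1),
            τsq * (v j * v k * ((J : ℝ) - 1) / (((J : ℝ) - (j : ℝ)) * ((k : ℝ) - 1))) := by
      have hsub : Icc 2 (J - 2) ⊆ Icc 2 (J - 1) := Finset.Icc_subset_Icc_right (by omega)
      have hz : ∀ x ∈ Icc 2 (J - 1), x ∉ Icc 2 (J - 2) →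
          (∑ k ∈ Icc (x + 1) (J - 1),
            τsq * (v x * v k * ((J : ℝ) - 1) / (((J : ℝ) - (x : ℝ)) * ((k : ℝ) - 1)))) = 0 := by
        intro x hx hxn
        rw [mem_Icc] at hx
        rw [mem_Icc] at hxn
        rw [Finset.Icc_eq_empty (by omega : ¬ x + 1 ≤ J - 1), Finset.sum_empty]
      rw [Finset.sum_subset hsub hz]
      refine Finset.sum_congr rfl fun j hj => ?_
      refine Finset.sum_congr rfl fun k hk => ?_
      have hj' := mem_Icc.mp hj
      have hk' := mem_Icc.mp hk
      have hkm : k ∈ Icc 2 (J - 1) := by rw [mem_Icc]; omega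
      rw [hAA j hj k hkm, if_neg (by omega : ¬ j = k), add_zero,
        Sdd_lt hJ hj'.1 (by omega) hk'.2]
      ring
    rw [ediag, eoff]
    simp only [← Finset.mul_sum]
    ring
  · -- variance of the CO estimator
    rw [variance_eq_covar βCO hMC, hCC]
    have e1 : ∑ x ∈ Sfin, PC x * PC x * V x
        = ∑ j ∈ Icc 2 (J - 1), ∑ k ∈ Icc 2 (J - 1),
            w j * w k * (∑ x ∈ Sfin, cB j x * cB k x * V x) := by
      have h0 : ∀ x : ℕ ⊕ ℕ × ℕ, PC x * PC x * V x
          = (∑ j ∈ Icc 2 (J - 1), w j * cB j x) * (∑ k ∈ Icc 2 (J - 1), w k * cB k x) * V x :=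
        fun x => by simp only [hPC]
      rw [Finset.sum_congr rfl fun x _ => h0 x]
      exact hexp w w cB cB
    rw [e1]
    have e2 : ∀ j ∈ Icc 2 (J - 1), ∑ k ∈ Icc 2 (J - 1),
          w j * w k * (∑ x ∈ Sfin, cB j x * cB k x * V x)
        = w j * w j * (2 * σ2 * (1 + ((J : ℝ) - (j : ℝ))⁻¹)) := by
      intro j hj
      rw [Finset.sum_eq_single_of_mem j hj]
      · rw [hBB j hj j hj, if_pos rfl]
      · intro k hk hkj
        rw [hBB j hj k hk, if_neg (fun h => hkj h.symm), mul_zero]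
    rw [Finset.sum_congr rfl e2, Finset.mul_sum]
    exact Finset.sum_congr rfl fun j _ => by ring
  · -- covariance of the estimators
    rw [hNC]
    have e1 : ∑ x ∈ Sfin, PN x * PC x * V x
        = ∑ j ∈ Icc 2 (J - 1), ∑ k ∈ Icc 2 (J - 1),
            v j * w k * (∑ x ∈ Sfin, cA j x * cB k x * V x) := by
      have h0 : ∀ x : ℕ ⊕ ℕ × ℕ, PN x * PC x * V x
          = (∑ j ∈ Icc 2 (J - 1), v j * cA j x) * (∑ k ∈ Icc 2 (J - 1), w k * cB k x) * V x :=
        fun x => by simp only [hPN, hPC]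
      rw [Finset.sum_congr rfl fun x _ => h0 x]
      exact hexp v w cA cB
    rw [e1]
    have e2 : ∀ j ∈ Icc 2 (J - 1), ∑ k ∈ Icc 2 (J - 1),
          v j * w k * (∑ x ∈ Sfin, cA j x * cB k x * V x)
        = v j * w j * (σ2 * (((j : ℝ) - 1)⁻¹ + ((J : ℝ) - (j : ℝ))⁻¹)) := by
      intro j hj
      rw [Finset.sum_eq_single_of_mem j hj]
      · rw [hAB j hj j hj, if_pos rfl]
      · intro k hk hkj
        rw [hAB j hj k hk, if_neg (fun h => hkj h.symm), mul_zero]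
    rw [Finset.sum_congr rfl e2, Finset.mul_sum]
    exact Finset.sum_congr rfl fun j _ => by ring
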